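/- (Anticode Bound) Let C ⊆ Mat_{n×m}(F_q) be an F_q-linear rank-metric code. Then dim_{F_q}(C) ≤ max{n,m}·maxrk(C). -/

import Mathlib

open Matrix Polynomial

noncomputable section AnticodeAux

variable (Fq : Type*) [Field Fq] [Fintype Fq]

/-- The splitting field of `X^(q^m) - X` over `Fq`: an extension of degree `m`. -/
def ExtField (m : ℕ) : Type _ :=
  Polynomial.SplittingField (X ^ (Fintype.card Fq) ^ m - X : Fq[X])

instance (m : ℕ) : Field (ExtField Fq m) := inferInstanceAs (Field (SplittingField _))
instance (m : ℕ) : Algebra Fq (ExtField Fq m) := inferInstanceAs (Algebra Fq (SplittingField _))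
instance (m : ℕ) : IsSplittingField Fq (ExtField Fq m) (X ^ (Fintype.card Fq) ^ m - X) :=
  IsSplittingField.splittingField _
instance (m : ℕ) : FiniteDimensional Fq (ExtField Fq m) :=
  IsSplittingField.finiteDimensional _ (X ^ (Fintype.card Fq) ^ m - X : Fq[X])
instance (m : ℕ) : Finite (ExtField Fq m) := Module.finite_of_finite Fq

theorem ExtField.pow_card_pow (m : ℕ) (x : ExtField Fq m) :
    x ^ (Fintype.card Fq) ^ m = x := by
  classical
  obtain ⟨p, hch⟩ := CharP.exists Fq
  haveI : CharP Fq p := hch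
  obtain ⟨s, hp, hcard⟩ := FiniteField.card Fq p
  haveI hfp : Fact p.Prime := ⟨hp⟩
  haveI : CharP (ExtField Fq m) p := (Algebra.charP_iff Fq (ExtField Fq m) p).mp hch
  have hqm : (Fintype.card Fq) ^ m = p ^ ((s : ℕ) * m) := by rw [hcard, ← pow_mul]
  let φ : ExtField Fq m →ₐ[Fq] ExtField Fq m :=
    AlgHom.mk' (iterateFrobenius (ExtField Fq m) p ((s : ℕ) * m)) (fun c x => by
      simp only [iterateFrobenius_def, Algebra.smul_def, mul_pow, ← map_pow, ← hqm,
        FiniteField.pow_card_pow])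
  have key : ⊤ ≤ AlgHom.equalizer φ (AlgHom.id Fq (ExtField Fq m)) := by
    rw [← IsSplittingField.adjoin_rootSet (K := Fq) (L := ExtField Fq m)
      (X ^ (Fintype.card Fq) ^ m - X : Fq[X])]
    apply Algebra.adjoin_le
    intro x hx
    rw [mem_rootSet] at hx
    have hx' := hx.2
    simp only [map_sub, map_pow, aeval_X, sub_eq_zero] at hx'
    show φ x = x
    simpa only [φ, AlgHom.coe_mk', iterateFrobenius_def, ← hqm] using hx'
  have hx := key (show x ∈ (⊤ : Subalgebra Fq (ExtField Fq m)) from trivial)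
  have : φ x = x := hx
  simpa only [φ, AlgHom.coe_mk', iterateFrobenius_def, ← hqm] using this

theorem ExtField.finrank_eq {m : ℕ} (hm : m ≠ 0) :
    Module.finrank Fq (ExtField Fq m) = m := by
  classical
  haveI : Fintype (ExtField Fq m) := Fintype.ofFinite _
  have h1 : 1 < Fintype.card Fq := Fintype.one_lt_card
  set g : Fq[X] := X ^ (Fintype.card Fq) ^ m - X with hg
  have hgne : g ≠ 0 := FiniteField.X_pow_card_pow_sub_X_ne_zero Fq hm h1
  obtain ⟨p, hch⟩ := CharP.exists Fq
  haveI : CharP Fq p := hch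
  obtain ⟨s, hp, hcard⟩ := FiniteField.card Fq p
  haveI hfp : Fact p.Prime := ⟨hp⟩
  have hsep : g.Separable := by
    apply galois_poly_separable p ((Fintype.card Fq) ^ m)
    rw [hcard, ← pow_mul]
    exact dvd_pow_self p (by positivity)
  have key : Fintype.card (g.rootSet (ExtField Fq m)) = g.natDegree :=
    card_rootSet_eq_natDegree hsep
      (SplittingField.splits (X ^ (Fintype.card Fq) ^ m - X : Fq[X]))
  have hdeg : g.natDegree = (Fintype.card Fq) ^ m :=
    FiniteField.X_pow_card_pow_sub_X_natDegree_eq Fq hm h1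
  have huniv : g.rootSet (ExtField Fq m) = Set.univ := by
    rw [Set.eq_univ_iff_forall]
    intro x
    rw [mem_rootSet_of_ne hgne]
    simp only [g, map_sub, map_pow, aeval_X, sub_eq_zero]
    exact ExtField.pow_card_pow Fq m x
  rw [hdeg] at key
  have keyN : Nat.card (ExtField Fq m) = Fintype.card Fq ^ m := by
    rw [← Nat.card_congr ((Equiv.setCongr huniv).trans (Equiv.Set.univ _)),
      Nat.card_eq_fintype_card]
    exact key
  have key' : Fintype.card (ExtField Fq m) = Fintype.card Fq ^ Module.finrank Fq (ExtField Fq m) :=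
    Module.card_eq_pow_finrank
  rw [← Nat.card_eq_fintype_card] at key'
  exact Nat.pow_right_injective h1 (key'.symm.trans keyN)

end AnticodeAux
section Gabidulin

variable {Fq : Type*} [Field Fq] [Fintype Fq]
variable {K : Type*} [Field K] [Algebra Fq K]

theorem add_pow_card_pow (l : ℕ) (x y : K) :
    (x + y) ^ (Fintype.card Fq) ^ l = x ^ (Fintype.card Fq) ^ l + y ^ (Fintype.card Fq) ^ l := by
  obtain ⟨p, hch⟩ := CharP.exists Fq
  haveI : CharP Fq p := hch
  obtain ⟨s, hp, hcard⟩ := FiniteField.card Fq p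
  haveI : Fact p.Prime := ⟨hp⟩
  haveI : CharP K p := (Algebra.charP_iff Fq K p).mp hch
  rw [hcard, ← pow_mul]
  exact add_pow_char_pow x y p ((s:ℕ)*l)

theorem smul_pow_card_pow (l : ℕ) (c : Fq) (x : K) :
    (c • x) ^ (Fintype.card Fq) ^ l = c • x ^ (Fintype.card Fq) ^ l := by
  rw [Algebra.smul_def, Algebra.smul_def, mul_pow, ← map_pow, FiniteField.pow_card_pow]

variable (Fq) in
/-- `x ↦ x ^ q ^ l` as an `Fq`-linear map. -/
def qmonomial (l : ℕ) : K →ₗ[Fq] K where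
  toFun x := x ^ (Fintype.card Fq) ^ l
  map_add' x y := add_pow_card_pow l x y
  map_smul' c x := smul_pow_card_pow l c x

variable (Fq) in
/-- The `q`-polynomial `x ↦ ∑ a l * x ^ q ^ l` as an `Fq`-linear map. -/
def qpoly (d : ℕ) (a : Fin d → K) : K →ₗ[Fq] K :=
  ∑ l : Fin d, a l • qmonomial Fq (l : ℕ)

theorem qpoly_apply (d : ℕ) (a : Fin d → K) (x : K) :
    qpoly Fq d a x = ∑ l : Fin d, a l * x ^ (Fintype.card Fq) ^ (l : ℕ) := by
  simp [qpoly, qmonomial, LinearMap.sum_apply, smul_eq_mul]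

theorem qpoly_add (d : ℕ) (a a' : Fin d → K) :
    qpoly Fq d (a + a') = qpoly Fq d a + qpoly Fq d a' := by
  simp [qpoly, add_smul, Finset.sum_add_distrib]

theorem qpoly_smul (d : ℕ) (c : Fq) (a : Fin d → K) :
    qpoly Fq d (c • a) = c • qpoly Fq d a := by
  simp [qpoly, Finset.smul_sum, smul_assoc]

open Polynomial in
theorem finrank_ker_qpoly_le [Fintype K] {d : ℕ} (hd : 0 < d) {a : Fin d → K} (ha : a ≠ 0) :
    Module.finrank Fq (LinearMap.ker (qpoly Fq d a)) ≤ d - 1 := by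
  classical
  set q := Fintype.card Fq with hq
  have h1 : 1 < q := Fintype.one_lt_card
  set P : K[X] := ∑ l : Fin d, C (a l) * X ^ (q ^ (l : ℕ)) with hP
  obtain ⟨l0, hl0⟩ : ∃ l, a l ≠ 0 := Function.ne_iff.mp ha
  have hcoeff : P.coeff (q ^ (l0 : ℕ)) = a l0 := by
    rw [hP, Polynomial.finset_sum_coeff]
    rw [Finset.sum_eq_single l0]
    · simp
    · intro l _ hl
      rw [coeff_C_mul, coeff_X_pow, if_neg, mul_zero]
      exact fun h => hl (Fin.ext (Nat.pow_right_injective h1 h)).symm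
    · simp
  have hPne : P ≠ 0 := fun h => hl0 (by rw [← hcoeff, h, coeff_zero])
  have hdeg : P.natDegree ≤ q ^ (d - 1) := by
    apply Polynomial.natDegree_sum_le_of_forall_le
    intro l _
    refine (Polynomial.natDegree_C_mul_le _ _).trans ?_
    rw [natDegree_X_pow]
    exact Nat.pow_le_pow_right (le_of_lt h1) (by omega)
  -- every element of the kernel is a root of `P`
  have hker : ∀ x ∈ LinearMap.ker (qpoly Fq d a), P.eval x = 0 := by
    intro x hx
    rw [LinearMap.mem_ker] at hx
    rw [hP, Polynomial.eval_finset_sum]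
    simpa [qpoly_apply] using hx
  haveI : Fintype (LinearMap.ker (qpoly Fq d a)) := Fintype.ofFinite _
  have hcard : Fintype.card (LinearMap.ker (qpoly Fq d a)) ≤ q ^ (d - 1) := by
    have hinj : Function.Injective (fun x : LinearMap.ker (qpoly Fq d a) =>
        (⟨(x : K), by
          rw [Multiset.mem_toFinset, Polynomial.mem_roots hPne]
          exact hker _ x.2⟩ : {y // y ∈ P.roots.toFinset})) := by
      intro x y h
      have h' := Subtype.ext_iff.mp h
      exact Subtype.ext h'
    calc Fintype.card (LinearMap.ker (qpoly Fq d a))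
        ≤ Fintype.card {y // y ∈ P.roots.toFinset} := Fintype.card_le_of_injective _ hinj
      _ = P.roots.toFinset.card := Fintype.card_coe _
      _ ≤ Multiset.card P.roots := Multiset.toFinset_card_le _
      _ ≤ P.natDegree := P.card_roots'
      _ ≤ q ^ (d - 1) := hdeg
  have hcard2 : Fintype.card (LinearMap.ker (qpoly Fq d a)) =
      q ^ Module.finrank Fq (LinearMap.ker (qpoly Fq d a)) := Module.card_eq_pow_finrank
  rw [hcard2] at hcard
  exact (Nat.pow_le_pow_iff_right h1).mp hcard

/-- Rank–nullity style inequality for a submodule. -/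
theorem finrank_le_finrank_map_add_finrank_ker {V V' : Type*} [AddCommGroup V] [Module Fq V]
    [AddCommGroup V'] [Module Fq V'] [FiniteDimensional Fq V] [FiniteDimensional Fq V']
    (f : V →ₗ[Fq] V') (W : Submodule Fq V) :
    Module.finrank Fq W ≤ Module.finrank Fq (W.map f) +
      Module.finrank Fq (LinearMap.ker f) := by
  have h1 := LinearMap.finrank_range_add_finrank_ker (f.domRestrict W)
  rw [LinearMap.range_domRestrict] at h1
  have h2 : Module.finrank Fq (LinearMap.ker (f.domRestrict W)) ≤
      Module.finrank Fq (LinearMap.ker f) := by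
    let ι : LinearMap.ker (f.domRestrict W) →ₗ[Fq] LinearMap.ker f :=
      LinearMap.codRestrict _ (W.subtype.comp (LinearMap.ker (f.domRestrict W)).subtype)
        (fun x => by
          have hx : f ((x : W) : V) = 0 := x.2
          simp only [LinearMap.mem_ker, LinearMap.coe_comp, Function.comp_apply,
            Submodule.coe_subtype]
          exact hx)
    have hinj : Function.Injective ι := by
      intro x y h
      have h' := Subtype.ext_iff.mp h
      exact Subtype.ext (Subtype.ext h')
    exact LinearMap.finrank_le_finrank_of_injective hinj
  omega

end Gabidulin
noncomputable section Main

variable {Fq : Type*} [Field Fq] [Fintype Fq]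
variable {K : Type*} [Field K] [Algebra Fq K]

variable (Fq) in
/-- The Gabidulin-code encoding map: coefficients of a `q`-polynomial to the matrix of
coordinates of its values at the points `g i`. -/
def gabidulin (d n m : ℕ) (g : Fin n → K) (b : Module.Basis (Fin m) Fq K) :
    (Fin d → K) →ₗ[Fq] Matrix (Fin n) (Fin m) Fq where
  toFun a := Matrix.of fun i j => b.equivFun (qpoly Fq d a (g i)) j
  map_add' a a' := by
    funext i j
    simp [qpoly_add, Matrix.add_apply]
  map_smul' c a := by
    funext i j
    simp [qpoly_smul, Matrix.smul_apply, smul_eq_mul]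

theorem gabidulin_row {d n m : ℕ} (g : Fin n → K) (b : Module.Basis (Fin m) Fq K)
    (a : Fin d → K) (i : Fin n) :
    (gabidulin Fq d n m g b a) i = b.equivFun (qpoly Fq d a (g i)) := rfl

theorem rank_gabidulin_ge [FiniteDimensional Fq K] {d n m : ℕ}
    (g : Fin n → K) (hg : LinearIndependent Fq g) (b : Module.Basis (Fin m) Fq K)
    (a : Fin d → K) :
    n - Module.finrank Fq (LinearMap.ker (qpoly Fq d a)) ≤ (gabidulin Fq d n m g b a).rank := by
  classical
  have hrange : Set.range (gabidulin Fq d n m g b a) =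
      ⇑b.equivFun.toLinearMap '' (⇑(qpoly Fq d a) '' Set.range g) := by
    rw [← Set.range_comp, ← Set.range_comp]
    rfl
  have hrank : (gabidulin Fq d n m g b a).rank = Module.finrank Fq
      (Submodule.map (qpoly Fq d a) (Submodule.span Fq (Set.range g))) := by
    rw [Matrix.rank_eq_finrank_span_row,
      show Set.range (gabidulin Fq d n m g b a).row = _ from hrange, Submodule.span_image,
      Submodule.span_image]
    exact LinearEquiv.finrank_map_eq b.equivFun _
  rw [hrank]
  have h1 := finrank_le_finrank_map_add_finrank_ker (qpoly Fq d a)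
    (Submodule.span Fq (Set.range g))
  have h2 : Module.finrank Fq (Submodule.span Fq (Set.range g)) = n := by
    rw [finrank_span_eq_card hg, Fintype.card_fin]
  omega

theorem gabidulin_injective [FiniteDimensional Fq K] [Fintype K] {d n m : ℕ}
    (hd : 0 < d) (hdn : d ≤ n) (g : Fin n → K) (hg : LinearIndependent Fq g)
    (b : Module.Basis (Fin m) Fq K) :
    Function.Injective (gabidulin Fq d n m g b) := by
  rw [← LinearMap.ker_eq_bot]
  rw [Submodule.eq_bot_iff]
  intro a ha
  rw [LinearMap.mem_ker] at ha
  by_contra hane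
  have hroots : ∀ i, qpoly Fq d a (g i) = 0 := by
    intro i
    have h0 : (gabidulin Fq d n m g b a) i = 0 := by rw [ha]; rfl
    rw [gabidulin_row] at h0
    exact b.equivFun.map_eq_zero_iff.mp h0
  have hle : Submodule.span Fq (Set.range g) ≤ LinearMap.ker (qpoly Fq d a) := by
    rw [Submodule.span_le]
    rintro x ⟨i, rfl⟩
    exact LinearMap.mem_ker.mpr (hroots i)
  have h1 : Module.finrank Fq (Submodule.span Fq (Set.range g)) = n := by
    rw [finrank_span_eq_card hg, Fintype.card_fin]
  have h2 := Submodule.finrank_mono hle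
  have h3 := finrank_ker_qpoly_le (Fq := Fq) hd hane
  omega

end Main
noncomputable section Final

theorem anticode_aux {Fq : Type*} [Field Fq] [Fintype Fq] {n m r : ℕ}
    (hn : 0 < n) (hnm : n ≤ m)
    (C : Submodule Fq (Matrix (Fin n) (Fin m) Fq))
    (hC : ∀ M ∈ C, M.rank ≤ r) : Module.finrank Fq C ≤ m * r := by
  classical
  have hMat : Module.finrank Fq (Matrix (Fin n) (Fin m) Fq) = n * m := by
    rw [Module.finrank_matrix]
    simp
  by_cases hrn : n ≤ r
  · calc Module.finrank Fq C ≤ n * m := hMat ▸ Submodule.finrank_le C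
      _ ≤ m * r := by rw [Nat.mul_comm]; exact Nat.mul_le_mul_left m hrn
  push_neg at hrn
  have hm0 : m ≠ 0 := by omega
  haveI : Fintype (ExtField Fq m) := Fintype.ofFinite _
  have hfr : Module.finrank Fq (ExtField Fq m) = m := ExtField.finrank_eq Fq hm0
  let b : Module.Basis (Fin m) Fq (ExtField Fq m) := (Module.finBasis Fq _).reindex (finCongr hfr)
  let g : Fin n → ExtField Fq m := fun i => b (Fin.castLE hnm i)
  have hg : LinearIndependent Fq g :=
    b.linearIndependent.comp _ (Fin.castLE_injective hnm)
  set d := n - r with hd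
  have hd0 : 0 < d := by omega
  have hdn : d ≤ n := by omega
  have hΦinj := gabidulin_injective hd0 hdn g hg b
  set A := LinearMap.range (gabidulin Fq d n m g b) with hA
  have hAdim : Module.finrank Fq A = d * m := by
    rw [hA, LinearMap.finrank_range_of_inj hΦinj, Module.finrank_pi_fintype]
    simp [hfr, Finset.sum_const, Fintype.card_fin, Nat.mul_comm]
  have hinf : C ⊓ A = ⊥ := by
    rw [Submodule.eq_bot_iff]
    rintro M ⟨hMC, hMA⟩
    obtain ⟨a, rfl⟩ := hMA
    rcases eq_or_ne a 0 with rfl | hane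
    · simp
    · exfalso
      have h1 := rank_gabidulin_ge g hg b a
      have h2 := finrank_ker_qpoly_le (Fq := Fq) hd0 hane
      have h3 := hC _ hMC
      omega
  have hsum := Submodule.finrank_sup_add_finrank_inf_eq C A
  rw [hinf] at hsum
  have hsup : Module.finrank Fq ((C ⊔ A : Submodule Fq (Matrix (Fin n) (Fin m) Fq))) ≤ n * m :=
    hMat ▸ Submodule.finrank_le _
  have hbot : Module.finrank Fq (⊥ : Submodule Fq (Matrix (Fin n) (Fin m) Fq)) = 0 := by simp
  have hmul : r * m + d * m = n * m := by rw [← Nat.add_mul]; congr 1; omega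
  have hcomm : m * r = r * m := Nat.mul_comm m r
  omega

end Final

open Matrix

/-- Maximum rank of a matrix rank-metric code. -/
noncomputable def maxrkMat {Fq : Type*} [Field Fq] {n m : ℕ}
    (C : Submodule Fq (Matrix (Fin n) (Fin m) Fq)) : ℕ :=
  sSup {r : ℕ | ∃ M ∈ C, M.rank = r}

/-- Anticode Bound for matrix rank-metric codes. -/
theorem stmt4 {Fq : Type*} [Field Fq] [Fintype Fq] {n m : ℕ} (hn : 0 < n) (hm : 0 < m)
    (C : Submodule Fq (Matrix (Fin n) (Fin m) Fq)) :
    Module.finrank Fq C ≤ max n m * maxrkMat C := by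
  classical
  have hbdd : BddAbove {r : ℕ | ∃ M ∈ C, M.rank = r} := by
    refine ⟨n, ?_⟩
    rintro r ⟨M, _, rfl⟩
    exact M.rank_le_card_height.trans (by simp)
  have hub : ∀ M ∈ C, M.rank ≤ maxrkMat C := fun M hM => le_csSup hbdd ⟨M, hM, rfl⟩
  rcases le_total n m with h | h
  · calc Module.finrank Fq C ≤ m * maxrkMat C := anticode_aux hn h C hub
      _ ≤ max n m * maxrkMat C := Nat.mul_le_mul_right _ (le_max_right n m)
  · set e := Matrix.transposeLinearEquiv (Fin n) (Fin m) Fq Fq with he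
    have hC' : ∀ M' ∈ C.map (e : Matrix (Fin n) (Fin m) Fq →ₗ[Fq] Matrix (Fin m) (Fin n) Fq),
        M'.rank ≤ maxrkMat C := by
      rintro M' ⟨M, hM, rfl⟩
      have : (e : Matrix (Fin n) (Fin m) Fq →ₗ[Fq] Matrix (Fin m) (Fin n) Fq) M = Mᵀ := rfl
      rw [this, Matrix.rank_transpose]
      exact hub M hM
    have h2 := anticode_aux hm h _ hC'
    have h3 := LinearEquiv.finrank_map_eq e C
    calc Module.finrank Fq C
        = Module.finrank Fq (C.map (e : Matrix (Fin n) (Fin m) Fq →ₗ[Fq]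
            Matrix (Fin m) (Fin n) Fq)) := h3.symm
      _ ≤ n * maxrkMat C := h2
      _ ≤ max n m * maxrkMat C := Nat.mul_le_mul_right _ (le_max_left n m)
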